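/- arXiv:2308.11738 — 3 statements merged into one kernel-verified Lean document; each statement's English description precedes it below -/
import Mathlib

section
/- The number of labeled directed acyclic graphs on n ≥ 1 vertices satisfies the recurrence a_n = Σ_{m=1}^{n} (-1)^{m+1} · C(n,m) · 2^{m(n-m)} · a_{n-m}, with a_0 = 1. -/
/-- A directed graph (relation) is a DAG if it has no directed cycle,
i.e. its transitive closure is irreflexive. -/
def IsDag {V : Type*} (E : V → V → Prop) : Prop :=
  Irreflexive (Relation.TransGen E)

/-- The number of labeled DAGs on the vertex set `Fin n`. -/
noncomputable def numDag (n : ℕ) : ℕ :=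
  Nat.card {E : Fin n → Fin n → Bool // IsDag (fun u v => E u v = true)}

lemma dag_card_congr {V W : Type*} (e : V ≃ W) :
    Nat.card {E : V → V → Bool // IsDag (fun u v => E u v = true)} =
    Nat.card {E : W → W → Bool // IsDag (fun u v => E u v = true)} := by
  refine Nat.card_congr ⟨fun E => ⟨fun u v => E.1 (e.symm u) (e.symm v), ?_⟩,
    fun F => ⟨fun u v => F.1 (e u) (e v), ?_⟩, ?_, ?_⟩
  · intro w hw
    exact E.2 (e.symm w) (hw.lift e.symm (fun a b h => h))
  · intro w hw
    exact F.2 (e w) (hw.lift e (fun a b h => h))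
  · intro E; ext u v; simp
  · intro F; ext u v; simp

/-- Counting DAGs where every vertex of `S` is a source. -/
lemma source_count (n : ℕ) (S : Finset (Fin n)) :
    Nat.card {E : Fin n → Fin n → Bool //
        IsDag (fun u v => E u v = true) ∧ ∀ v ∈ S, ∀ u, E u v = false} =
    2 ^ (S.card * (n - S.card)) * numDag (n - S.card) := by
  classical
  have hmem : ∀ v : Fin n, v ∉ S → v ∈ Sᶜ := fun v hv => Finset.mem_compl.2 hv
  -- the equivalence
  have key : Nat.card {E : Fin n → Fin n → Bool //
        IsDag (fun u v => E u v = true) ∧ ∀ v ∈ S, ∀ u, E u v = false} =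
      Nat.card ((↥S → ↥(Sᶜ) → Bool) ×
        {F : ↥(Sᶜ) → ↥(Sᶜ) → Bool // IsDag (fun u v => F u v = true)}) := by
    refine Nat.card_congr ⟨fun E => ⟨fun a b => E.1 a b, ⟨fun a b => E.1 a b, ?_⟩⟩,
      fun p => ⟨fun u v =>
        if hv : v ∈ S then false
        else if hu : u ∈ S then p.1 ⟨u, hu⟩ ⟨v, hmem v hv⟩
        else p.2.1 ⟨u, hmem u hu⟩ ⟨v, hmem v hv⟩, ?_, ?_⟩, ?_, ?_⟩
    · -- restriction of a DAG is a DAG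
      intro w hw
      exact E.2.1 w (hw.lift Subtype.val (fun a b h => h))
    · -- the constructed graph is a DAG
      intro w hw
      obtain ⟨g, F, hF⟩ := p
      dsimp only at hw
      -- any TransGen path ends outside S, and if it starts outside S it lifts to F
      have claim : ∀ a b : Fin n, Relation.TransGen (fun u v =>
          (if hv : v ∈ S then false
           else if hu : u ∈ S then g ⟨u, hu⟩ ⟨v, hmem v hv⟩
           else F ⟨u, hmem u hu⟩ ⟨v, hmem v hv⟩) = true) a b →
          ∃ hb : b ∉ S, ∀ ha : a ∉ S,
            Relation.TransGen (fun x y : ↥(Sᶜ) => F x y = true)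
              ⟨a, hmem a ha⟩ ⟨b, hmem b hb⟩ := by
        intro a b hab
        induction hab with
        | @single c h' =>
          by_cases hc : c ∈ S
          · rw [dif_pos hc] at h'; exact absurd h' (by simp)
          · refine ⟨hc, fun ha => ?_⟩
            rw [dif_neg hc, dif_neg ha] at h'
            exact Relation.TransGen.single h'
        | @tail b' c hab hbc ih =>
          obtain ⟨hb', ih'⟩ := ih
          by_cases hc : c ∈ S
          · rw [dif_pos hc] at hbc; exact absurd hbc (by simp)
          · refine ⟨hc, fun ha => ?_⟩
            rw [dif_neg hc, dif_neg hb'] at hbc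
            exact (ih' ha).tail hbc
      obtain ⟨hb, h2⟩ := claim w w hw
      exact hF _ (h2 hb)
    · -- constructed graph: sources condition
      intro v hv u
      dsimp only
      rw [dif_pos hv]
    · -- left inverse
      rintro ⟨E, hdag, hsrc⟩
      ext u v
      dsimp only
      by_cases hv : v ∈ S
      · rw [dif_pos hv, hsrc v hv u]
      · rw [dif_neg hv]
        by_cases hu : u ∈ S
        · rw [dif_pos hu]
        · rw [dif_neg hu]
    · -- right inverse
      rintro ⟨g, F, hF⟩
      refine Prod.ext ?_ (Subtype.ext ?_)
      · ext a b
        have hbS : (b : Fin n) ∉ S := Finset.mem_compl.1 b.2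
        dsimp only
        rw [dif_neg hbS, dif_pos a.2]
      · ext a b
        have hbS : (b : Fin n) ∉ S := Finset.mem_compl.1 b.2
        have haS : (a : Fin n) ∉ S := Finset.mem_compl.1 a.2
        dsimp only
        rw [dif_neg hbS, dif_neg haS]
  rw [key, Nat.card_prod]
  congr 1
  · rw [Nat.card_fun, Nat.card_fun]
    simp only [Nat.card_eq_fintype_card, Fintype.card_bool, Fintype.card_coe,
      Finset.card_compl, Fintype.card_fin, ← pow_mul]
    ring_nf
  · rw [numDag, dag_card_congr (V := ↥(Sᶜ)) (W := Fin (n - S.card))]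
    exact Fintype.equivFinOfCardEq (by simp [Finset.card_compl])

/-- Every DAG on a nonempty finite type has a source (vertex with no in-edge). -/
lemma exists_source {V : Type*} [Fintype V] [Nonempty V] {E : V → V → Prop}
    (h : IsDag E) : ∃ v, ∀ u, ¬ E u v := by
  by_contra hc
  push_neg at hc
  choose f hf using hc
  obtain ⟨v⟩ := ‹Nonempty V›
  have key : ∀ a b : ℕ, a < b → Relation.TransGen E (f^[b] v) (f^[a] v) := by
    intro a b hab
    induction b with
    | zero => omega
    | succ b ih =>
      have step : E (f^[b+1] v) (f^[b] v) := by
        rw [Function.iterate_succ_apply']; exact hf _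
      rcases Nat.lt_or_ge a b with h' | h'
      · exact (ih h').head step
      · have : a = b := by omega
        subst this
        exact Relation.TransGen.single step
  obtain ⟨i, j, hij, hne⟩ : ∃ i j, f^[i] v = f^[j] v ∧ i ≠ j := by
    have : ¬ Function.Injective (fun k : ℕ => f^[k] v) :=
      not_injective_infinite_finite _
    simp only [Function.Injective, not_forall] at this
    obtain ⟨i, j, h1, h2⟩ := this
    exact ⟨i, j, h1, h2⟩
  rcases Nat.lt_or_ge i j with h' | h'
  · exact h _ (hij ▸ key i j h')
  · exact h _ (hij.symm ▸ key j i (by omega))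


section aux
variable {α : Type*} [DecidableEq α]

lemma ie_lemma {T : Finset α} (hT : T.Nonempty) :
    ∑ S ∈ T.powerset.filter (fun S => S.Nonempty), (-1 : ℤ) ^ (S.card + 1) = 1 := by
  have h0 : ∑ S ∈ T.powerset, (-1 : ℤ) ^ S.card = 0 :=
    Finset.sum_powerset_neg_one_pow_card_of_nonempty hT
  rw [← Finset.sum_filter_add_sum_filter_not T.powerset (fun S => S.Nonempty)] at h0
  have h1 : T.powerset.filter (fun S => ¬ S.Nonempty) = {∅} := by
    ext S
    simp only [Finset.mem_filter, Finset.mem_powerset, Finset.not_nonempty_iff_eq_empty,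
      Finset.mem_singleton]
    constructor
    · rintro ⟨_, h⟩; exact h
    · rintro rfl; exact ⟨Finset.empty_subset _, rfl⟩
  rw [h1, Finset.sum_singleton] at h0
  simp only [Finset.card_empty, pow_zero] at h0
  have h2 : ∑ S ∈ T.powerset.filter (fun S => S.Nonempty), (-1 : ℤ) ^ S.card = -1 := by
    linarith
  calc ∑ S ∈ T.powerset.filter (fun S => S.Nonempty), (-1 : ℤ) ^ (S.card + 1)
      = -∑ S ∈ T.powerset.filter (fun S => S.Nonempty), (-1 : ℤ) ^ S.card := by
        rw [← Finset.sum_neg_distrib]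
        exact Finset.sum_congr rfl fun S _ => by ring
    _ = 1 := by rw [h2]; ring
end aux


theorem stmt0 :
    numDag 0 = 1 ∧
    ∀ n : ℕ, 1 ≤ n →
      (numDag n : ℤ) = ∑ m ∈ Finset.Icc 1 n,
        (-1 : ℤ) ^ (m + 1) * (n.choose m : ℤ) * 2 ^ (m * (n - m)) * (numDag (n - m) : ℤ) := by
  classical
  constructor
  · -- numDag 0 = 1
    haveI : Unique {E : Fin 0 → Fin 0 → Bool // IsDag (fun u v => E u v = true)} :=
      ⟨⟨⟨fun x _ => x.elim0, fun a => a.elim0⟩⟩,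
        fun E => Subtype.ext (funext fun x => x.elim0)⟩
    exact Nat.card_unique
  · intro n hn
    haveI : NeZero n := ⟨by omega⟩
    -- the finset of DAGs
    set D : Finset (Fin n → Fin n → Bool) :=
      Finset.univ.filter (fun E => IsDag (fun u v => E u v = true)) with hD
    set P : Finset (Finset (Fin n)) :=
      (Finset.univ : Finset (Fin n)).powerset.filter (fun S => S.Nonempty) with hP
    have hcount : ∀ (p : (Fin n → Fin n → Bool) → Prop),
        Nat.card {E // p E} = (Finset.univ.filter p).card := by
      intro p
      rw [Nat.card_eq_fintype_card, Fintype.card_subtype]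
    have hDcard : (numDag n : ℤ) = ∑ _E ∈ D, (1 : ℤ) := by
      rw [Finset.sum_const, nsmul_eq_mul, mul_one, hD, numDag, hcount]
    -- inclusion-exclusion per DAG
    have stepB : ∀ E ∈ D, (1 : ℤ) =
        ∑ S ∈ P, (if ∀ v ∈ S, ∀ u, E u v = false then (-1 : ℤ) ^ (S.card + 1) else 0) := by
      intro E hE
      rw [hD, Finset.mem_filter] at hE
      set T : Finset (Fin n) := Finset.univ.filter (fun v => ∀ u, E u v = false) with hT
      have hTne : T.Nonempty := by
        obtain ⟨v, hv⟩ := exists_source hE.2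
        exact ⟨v, by simp [hT, fun u => hv u]⟩
      have hsub : ∀ S : Finset (Fin n), (∀ v ∈ S, ∀ u, E u v = false) ↔ S ⊆ T := by
        intro S
        constructor
        · intro h x hx; simp only [hT, Finset.mem_filter, Finset.mem_univ, true_and]
          exact h x hx
        · intro h v hv u
          have := h hv
          simp only [hT, Finset.mem_filter] at this
          exact this.2 u
      rw [← Finset.sum_filter]
      have hPT : P.filter (fun S => ∀ v ∈ S, ∀ u, E u v = false)
          = T.powerset.filter (fun S => S.Nonempty) := by
        ext S
        simp only [hP, Finset.mem_filter, Finset.mem_powerset, hsub]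
        constructor
        · rintro ⟨⟨_, h2⟩, h3⟩; exact ⟨h3, h2⟩
        · rintro ⟨h1, h2⟩; exact ⟨⟨Finset.subset_univ _, h2⟩, h1⟩
      rw [hPT, ie_lemma hTne]
    -- swap sums
    have stepC : (numDag n : ℤ) = ∑ S ∈ P, (-1 : ℤ) ^ (S.card + 1) *
        ((D.filter (fun E => ∀ v ∈ S, ∀ u, E u v = false)).card : ℤ) := by
      rw [hDcard, Finset.sum_congr rfl stepB, Finset.sum_comm]
      refine Finset.sum_congr rfl fun S _ => ?_
      rw [← Finset.sum_filter, Finset.sum_const, nsmul_eq_mul, mul_comm]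
    -- count per S
    have stepE : ∀ S ∈ P,
        ((D.filter (fun E => ∀ v ∈ S, ∀ u, E u v = false)).card : ℤ)
          = 2 ^ (S.card * (n - S.card)) * (numDag (n - S.card) : ℤ) := by
      intro S _
      have : D.filter (fun E => ∀ v ∈ S, ∀ u, E u v = false)
          = Finset.univ.filter (fun E => IsDag (fun u v => E u v = true)
              ∧ ∀ v ∈ S, ∀ u, E u v = false) := by
        rw [hD, Finset.filter_filter]
      rw [this, ← Fintype.card_subtype, ← Nat.card_eq_fintype_card, source_count]
      push_cast
      ring
    rw [stepC, Finset.sum_congr rfl (fun S hS => by rw [stepE S hS])]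
    -- fiber by cardinality
    have maps : ∀ S ∈ P, S.card ∈ Finset.Icc 1 n := by
      intro S hS
      rw [hP, Finset.mem_filter] at hS
      rw [Finset.mem_Icc]
      constructor
      · exact hS.2.card_pos
      · calc S.card ≤ (Finset.univ : Finset (Fin n)).card := Finset.card_le_card (Finset.subset_univ _)
          _ = n := by simp
    have fib := Finset.sum_fiberwise_of_maps_to (g := fun S : Finset (Fin n) => S.card) maps
      (fun S : Finset (Fin n) => (-1 : ℤ) ^ (S.card + 1) * (2 ^ (S.card * (n - S.card)) * (numDag (n - S.card) : ℤ)))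
    rw [← fib]
    refine Finset.sum_congr rfl fun m hm => ?_
    rw [Finset.mem_Icc] at hm
    have hfil : P.filter (fun S => S.card = m) = Finset.powersetCard m (Finset.univ : Finset (Fin n)) := by
      ext S
      simp only [hP, Finset.mem_filter, Finset.mem_powerset, Finset.mem_powersetCard]
      constructor
      · rintro ⟨⟨h1, _⟩, h3⟩; exact ⟨h1, h3⟩
      · rintro ⟨h1, h2⟩
        exact ⟨⟨h1, Finset.card_pos.1 (h2 ▸ hm.1)⟩, h2⟩
    have hsum : ∑ S ∈ P.filter (fun S => S.card = m),
        (-1 : ℤ) ^ (S.card + 1) * (2 ^ (S.card * (n - S.card)) * (numDag (n - S.card) : ℤ))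
        = (n.choose m : ℤ) * ((-1 : ℤ) ^ (m + 1) * (2 ^ (m * (n - m)) * (numDag (n - m) : ℤ))) := by
      have hcg : ∀ S ∈ P.filter (fun S => S.card = m),
          (-1 : ℤ) ^ (S.card + 1) * (2 ^ (S.card * (n - S.card)) * (numDag (n - S.card) : ℤ))
          = (-1 : ℤ) ^ (m + 1) * (2 ^ (m * (n - m)) * (numDag (n - m) : ℤ)) := by
        intro S hS
        rw [Finset.mem_filter] at hS
        rw [hS.2]
      rw [Finset.sum_congr rfl hcg, Finset.sum_const, hfil, Finset.card_powersetCard,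
        Finset.card_univ, Fintype.card_fin, nsmul_eq_mul]
    rw [hsum]
    ring
end

section
/- For each m with 1 ≤ m ≤ n, the number of directed acyclic graphs on the labeled vertex set [n] in which every vertex in {1,...,m} has indegree zero equals 2^{m(n-m)} · a_{n-m}, where a_k is the number of DAGs on k labeled vertices. -/
/-- Embedding of the tail `Fin (n-m)` into `Fin n`. -/
def fe {n m : ℕ} (h : m ≤ n) (a : Fin (n - m)) : Fin n := ⟨m + a, by omega⟩

lemma fe_val {n m : ℕ} (h : m ≤ n) (a : Fin (n - m)) : (fe h a : ℕ) = m + a := rfl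

lemma fe_inj {n m : ℕ} (h : m ≤ n) : Function.Injective (fe h) := by
  intro a b hab
  have : m + (a : ℕ) = m + b := congrArg Fin.val hab
  exact Fin.ext (by omega)

lemma key_backward {n m : ℕ} (h : m ≤ n) (E : Fin n → Fin n → Bool)
    (H : ∀ u v : Fin n, E u v = true → m ≤ (v : ℕ))
    {x y : Fin n} (hxy : Relation.TransGen (fun u v => E u v = true) x y) :
    ∀ a : Fin (n - m), fe h a = x →
      ∃ b, fe h b = y ∧
        Relation.TransGen (fun a b => E (fe h a) (fe h b) = true) a b := by
  induction hxy with
  | single hxy =>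
    intro a ha
    rename_i y'
    have hy : m ≤ (y' : ℕ) := H _ _ hxy
    refine ⟨⟨(y' : ℕ) - m, by omega⟩, Fin.ext (by simp [fe_val]; omega), ?_⟩
    apply Relation.TransGen.single
    have hb : fe h ⟨(y' : ℕ) - m, by omega⟩ = y' := Fin.ext (by simp [fe_val]; omega)
    rw [ha, hb]
    exact hxy
  | tail hxy hedge ih =>
    intro a ha
    rename_i y' z'
    obtain ⟨b, hb, htg⟩ := ih a ha
    have hz : m ≤ (z' : ℕ) := H _ _ hedge
    refine ⟨⟨(z' : ℕ) - m, by omega⟩, Fin.ext (by simp [fe_val]; omega), ?_⟩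
    apply htg.tail
    have hc : fe h ⟨(z' : ℕ) - m, by omega⟩ = z' := Fin.ext (by simp [fe_val]; omega)
    rw [hb, hc]
    exact hedge

lemma isDag_restrict {n m : ℕ} (h : m ≤ n) (E : Fin n → Fin n → Bool)
    (hE : IsDag (fun u v => E u v = true)) :
    IsDag (fun a b : Fin (n - m) => E (fe h a) (fe h b) = true) := by
  intro a ha
  exact hE (fe h a) (ha.lift (fe h) (fun _ _ hh => hh))

lemma isDag_of_restrict {n m : ℕ} (h : m ≤ n) (E : Fin n → Fin n → Bool)
    (H : ∀ u v : Fin n, E u v = true → m ≤ (v : ℕ))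
    (hE : IsDag (fun a b : Fin (n - m) => E (fe h a) (fe h b) = true)) :
    IsDag (fun u v => E u v = true) := by
  intro x hx
  obtain ⟨w, hw, hwx⟩ := Relation.TransGen.tail'_iff.mp hx
  have hxm : m ≤ (x : ℕ) := H _ _ hwx
  obtain ⟨b, hb, htg⟩ := key_backward h E H hx ⟨(x : ℕ) - m, by omega⟩
    (Fin.ext (by simp [fe_val]; omega))
  have hba : b = ⟨(x : ℕ) - m, by omega⟩ := fe_inj h (by
    apply Fin.ext
    have hv := congrArg Fin.val hb
    simp only [fe_val] at hv ⊢
    omega)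
  rw [hba] at htg
  exact hE _ htg

/-- The combined edge function for the inverse map. -/
def combE {n m : ℕ} (h : m ≤ n) (C : Fin m → Fin (n - m) → Bool)
    (E' : Fin (n - m) → Fin (n - m) → Bool) : Fin n → Fin n → Bool := fun u v =>
  if hv : (v : ℕ) < m then false
  else if hu : (u : ℕ) < m then C ⟨u, hu⟩ ⟨(v : ℕ) - m, by omega⟩
  else E' ⟨(u : ℕ) - m, by omega⟩ ⟨(v : ℕ) - m, by omega⟩

lemma combE_target {n m : ℕ} (h : m ≤ n) (C : Fin m → Fin (n - m) → Bool)
    (E' : Fin (n - m) → Fin (n - m) → Bool) (u v : Fin n)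
    (he : combE h C E' u v = true) : m ≤ (v : ℕ) := by
  by_contra hvm
  simp only [not_le] at hvm
  rw [combE, dif_pos hvm] at he
  exact absurd he (by simp)

lemma combE_restrict {n m : ℕ} (h : m ≤ n) (C : Fin m → Fin (n - m) → Bool)
    (E' : Fin (n - m) → Fin (n - m) → Bool) (a b : Fin (n - m)) :
    combE h C E' (fe h a) (fe h b) = E' a b := by
  rw [combE]
  rw [dif_neg (show ¬ ((fe h b : Fin n) : ℕ) < m by simp only [fe]; omega)]
  rw [dif_neg (show ¬ ((fe h a : Fin n) : ℕ) < m by simp only [fe]; omega)]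
  all_goals first
    | rfl
    | (congr 1 <;> exact Fin.ext (by simp [fe] <;> omega))

/-- The bijection. -/
noncomputable def theEquiv {n m : ℕ} (h : m ≤ n) :
    {E : Fin n → Fin n → Bool //
      IsDag (fun u v => E u v = true) ∧
      ∀ v : Fin n, (v : ℕ) < m → ∀ u : Fin n, E u v = false} ≃
    ((Fin m → Fin (n - m) → Bool) ×
      {E' : Fin (n - m) → Fin (n - m) → Bool // IsDag (fun u v => E' u v = true)}) where
  toFun := fun ⟨E, hdag, _⟩ =>
    ⟨fun i a => E ⟨i, by omega⟩ (fe h a),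
     ⟨fun a b => E (fe h a) (fe h b), isDag_restrict h E hdag⟩⟩
  invFun := fun ⟨C, E', hE'⟩ =>
    ⟨combE h C E', by
      constructor
      · apply isDag_of_restrict h _ (combE_target h C E')
        have heq : (fun a b : Fin (n - m) => combE h C E' (fe h a) (fe h b) = true)
            = fun a b => E' a b = true := by
          funext a b
          rw [combE_restrict]
        rw [heq]
        exact hE'
      · intro v hv u
        rw [combE, dif_pos hv]⟩
  left_inv := by
    rintro ⟨E, hdag, hzero⟩
    apply Subtype.ext
    funext u v
    simp only [combE]
    by_cases hv : (v : ℕ) < m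
    · rw [dif_pos hv, hzero v hv u]
    · rw [dif_neg hv]
      by_cases hu : (u : ℕ) < m
      · rw [dif_pos hu]
        all_goals first
          | rfl
          | (congr 1 <;> exact Fin.ext (by simp [fe] <;> omega))
      · rw [dif_neg hu]
        all_goals first
          | rfl
          | (congr 1 <;> exact Fin.ext (by simp [fe] <;> omega))
  right_inv := by
    rintro ⟨C, E', hE'⟩
    refine Prod.ext ?_ (Subtype.ext ?_)
    · funext i a
      simp only [combE]
      rw [dif_neg (show ¬ ((fe h a : Fin n) : ℕ) < m by simp only [fe]; omega)]
      rw [dif_pos (show ((⟨(i : ℕ), by omega⟩ : Fin n) : ℕ) < m from i.2)]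
      all_goals first
        | rfl
        | (congr 1 <;> exact Fin.ext (by simp [fe] <;> omega))
    · funext a b
      exact combE_restrict h C E' a b

theorem stmt2 (n m : ℕ) (h1 : 1 ≤ m) (h2 : m ≤ n) :
    Nat.card {E : Fin n → Fin n → Bool //
      IsDag (fun u v => E u v = true) ∧
      ∀ v : Fin n, (v : ℕ) < m → ∀ u : Fin n, E u v = false}
      = 2 ^ (m * (n - m)) * numDag (n - m) := by
  rw [Nat.card_congr (theEquiv h2), Nat.card_prod, numDag]
  congr 1
  rw [Nat.card_eq_fintype_card]
  simp only [Fintype.card_fun, Fintype.card_fin, Fintype.card_bool]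
  rw [← pow_mul, Nat.mul_comm]
end

section
/- For 1 ≤ m ≤ n, the number of pairs (G, r) where G is a simple graph on the labeled vertex set [n] whose connected component containing the distinguished root vertex r is exactly the set {1,...,m}, equals m · c_m · 2^{C(n-m,2)}, where c_m is the number of connected graphs on m labeled vertices. -/
/-- The number of connected simple graphs on the labeled vertex set `Fin n`. -/
noncomputable def numConn (n : ℕ) : ℕ :=
  Nat.card {G : SimpleGraph (Fin n) // G.Connected}

open SimpleGraph

section CardGraph

/-- A simple graph is determined by its set of (non-diagonal) edges. -/
def graphEquivSet (V : Type*) : SimpleGraph V ≃ Set {e : Sym2 V // ¬ e.IsDiag} where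
  toFun G := {e | (e : Sym2 V) ∈ G.edgeSet}
  invFun s := SimpleGraph.fromEdgeSet (Subtype.val '' s)
  left_inv G := by
    have : Subtype.val '' {e : {e : Sym2 V // ¬ e.IsDiag} | (e : Sym2 V) ∈ G.edgeSet}
        = G.edgeSet := by
      ext e
      constructor
      · rintro ⟨⟨e', hd⟩, he', rfl⟩
        exact he'
      · intro he
        exact ⟨⟨e, G.not_isDiag_of_mem_edgeSet he⟩, he, rfl⟩
    dsimp only
    rw [this, SimpleGraph.fromEdgeSet_edgeSet]
  right_inv s := by
    ext e
    simp only [Set.mem_setOf_eq, SimpleGraph.edgeSet_fromEdgeSet, Set.mem_diff,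
      Set.mem_setOf_eq]
    constructor
    · rintro ⟨he, -⟩
      exact (Subtype.coe_injective.mem_set_image).1 he
    · intro he
      exact ⟨⟨e, he, rfl⟩, e.2⟩

lemma card_simpleGraph (k : ℕ) : Nat.card (SimpleGraph (Fin k)) = 2 ^ k.choose 2 := by
  rw [Nat.card_congr (graphEquivSet (Fin k))]
  rw [Nat.card_eq_fintype_card, Fintype.card_set, Sym2.card_subtype_not_diag,
    Fintype.card_fin]

end CardGraph

section Glue

variable {n m : ℕ}

/-- Embedding of low vertices. -/
def lowV (h2 : m ≤ n) : Fin m → Fin n := Fin.castLE h2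

/-- Embedding of high vertices. -/
def highV (h2 : m ≤ n) : Fin (n - m) → Fin n :=
  fun v => ⟨m + v, by have := v.isLt; omega⟩

lemma lowV_val (h2 : m ≤ n) (a : Fin m) : ((lowV h2 a : Fin n) : ℕ) = a := rfl

lemma highV_val (h2 : m ≤ n) (a : Fin (n - m)) : ((highV h2 a : Fin n) : ℕ) = m + a := rfl

lemma finMkVal {k x : ℕ} (h : x < k) : ((⟨x, h⟩ : Fin k) : ℕ) = x := rfl

/-- Glue a graph on the low `m` vertices with a graph on the high `n - m` vertices. -/
def glue (h2 : m ≤ n) (H : SimpleGraph (Fin m)) (K : SimpleGraph (Fin (n - m))) :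
    SimpleGraph (Fin n) where
  Adj u v :=
    (∃ hu : (u : ℕ) < m, ∃ hv : (v : ℕ) < m, H.Adj ⟨u, hu⟩ ⟨v, hv⟩) ∨
    (∃ hu : m ≤ (u : ℕ), ∃ hv : m ≤ (v : ℕ),
      K.Adj ⟨(u : ℕ) - m, by have := u.isLt; omega⟩ ⟨(v : ℕ) - m, by have := v.isLt; omega⟩)
  symm := by
    constructor
    rintro u v (⟨hu, hv, h⟩ | ⟨hu, hv, h⟩)
    · exact Or.inl ⟨hv, hu, h.symm⟩
    · exact Or.inr ⟨hv, hu, h.symm⟩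
  loopless := by
    constructor
    rintro u (⟨hu, hv, h⟩ | ⟨hu, hv, h⟩)
    · exact H.irrefl h
    · exact K.irrefl h

variable {h2 : m ≤ n} {H : SimpleGraph (Fin m)} {K : SimpleGraph (Fin (n - m))}

lemma glue_adj_low {u v : Fin n} (hu : (u : ℕ) < m) (hv : (v : ℕ) < m) :
    (glue h2 H K).Adj u v ↔ H.Adj ⟨u, hu⟩ ⟨v, hv⟩ := by
  constructor
  · rintro (⟨hu', hv', h⟩ | ⟨hu', hv', h⟩)
    · exact h
    · omega
  · intro h
    exact Or.inl ⟨hu, hv, h⟩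

lemma glue_adj_high {u v : Fin n} (hu : m ≤ (u : ℕ)) (hv : m ≤ (v : ℕ)) :
    (glue h2 H K).Adj u v ↔
      K.Adj ⟨(u : ℕ) - m, by have := u.isLt; omega⟩ ⟨(v : ℕ) - m, by have := v.isLt; omega⟩ := by
  constructor
  · rintro (⟨hu', hv', h⟩ | ⟨hu', hv', h⟩)
    · omega
    · exact h
  · intro h
    exact Or.inr ⟨hu, hv, h⟩

lemma glue_adj_lt_iff {u v : Fin n} (h : (glue h2 H K).Adj u v) :
    ((u : ℕ) < m ↔ (v : ℕ) < m) := by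
  rcases h with ⟨hu, hv, -⟩ | ⟨hu, hv, -⟩ <;> omega

lemma glue_reach_lt_iff {u v : Fin n} (h : (glue h2 H K).Reachable u v) :
    ((u : ℕ) < m ↔ (v : ℕ) < m) := by
  rw [reachable_iff_reflTransGen] at h
  induction h with
  | refl => rfl
  | tail _ hadj ih => exact ih.trans (glue_adj_lt_iff hadj)

lemma glue_reach_H {u v : Fin n} (h : (glue h2 H K).Reachable u v)
    (hu : (u : ℕ) < m) (hv : (v : ℕ) < m) : H.Reachable ⟨u, hu⟩ ⟨v, hv⟩ := by
  rw [reachable_iff_reflTransGen] at h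
  induction h with
  | refl => exact Reachable.refl _
  | @tail b c hub hadj ih =>
      have hb : (b : ℕ) < m := (glue_adj_lt_iff hadj).2 hv
      exact (ih hb).trans ((glue_adj_low hb hv).1 hadj).reachable

lemma glue_reach_of_H {a b : Fin m} (h : H.Reachable a b) :
    (glue h2 H K).Reachable (lowV h2 a) (lowV h2 b) := by
  rw [reachable_iff_reflTransGen] at h
  induction h with
  | refl => exact Reachable.refl _
  | @tail x y hax hadj ih =>
      refine ih.trans (Adj.reachable ?_)
      have hx : ((lowV h2 x : Fin n) : ℕ) < m := x.isLt
      have hy : ((lowV h2 y : Fin n) : ℕ) < m := y.isLt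
      rw [glue_adj_low hx hy]
      convert hadj using 2 <;> rfl

lemma glue_component (hH : H.Connected) (r : Fin m) :
    {v : Fin n | (glue h2 H K).Reachable (lowV h2 r) v} = {v : Fin n | (v : ℕ) < m} := by
  ext v
  simp only [Set.mem_setOf_eq]
  constructor
  · intro h
    exact (glue_reach_lt_iff h).1 r.isLt
  · intro hv
    have : v = lowV h2 ⟨v, hv⟩ := Fin.ext rfl
    rw [this]
    exact glue_reach_of_H (hH.preconnected r ⟨v, hv⟩)

end Glue

theorem stmt4 (n m : ℕ) (h1 : 1 ≤ m) (h2 : m ≤ n) :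
    Nat.card {p : SimpleGraph (Fin n) × Fin n //
      {v : Fin n | p.1.Reachable p.2 v} = {v : Fin n | (v : ℕ) < m}}
      = m * numConn m * 2 ^ ((n - m).choose 2) := by
  -- key structural facts for a pair in the set
  have key : ∀ (G : SimpleGraph (Fin n)) (r : Fin n),
      {v : Fin n | G.Reachable r v} = {v : Fin n | (v : ℕ) < m} →
      ((r : ℕ) < m ∧
        G = glue h2 (G.comap (lowV h2)) (G.comap (highV h2)) ∧
        (G.comap (lowV h2)).Connected) := by
    intro G r hS
    have hmem : ∀ v : Fin n, G.Reachable r v ↔ (v : ℕ) < m := by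
      intro v
      constructor
      · intro h
        have hv : v ∈ {v : Fin n | G.Reachable r v} := h
        rw [hS] at hv
        exact hv
      · intro h
        have : v ∈ {v : Fin n | (v : ℕ) < m} := h
        rw [← hS] at this
        exact this
    have hr : (r : ℕ) < m := (hmem r).1 (Reachable.refl r)
    -- no cross edges
    have hcross : ∀ u v : Fin n, (u : ℕ) < m → m ≤ (v : ℕ) → ¬ G.Adj u v := by
      intro u v hu hv hadj
      have h1' : G.Reachable r u := (hmem u).2 hu
      have h2' : G.Reachable r v := h1'.trans hadj.reachable
      have := (hmem v).1 h2'
      omega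
    have hglue : G = glue h2 (G.comap (lowV h2)) (G.comap (highV h2)) := by
      ext u v
      show G.Adj u v ↔ _
      constructor
      · intro hadj
        by_cases hu : (u : ℕ) < m
        · by_cases hv : (v : ℕ) < m
          · refine Or.inl ⟨hu, hv, ?_⟩
            show G.Adj (lowV h2 ⟨u, hu⟩) (lowV h2 ⟨v, hv⟩)
            convert hadj using 1 <;> exact Fin.ext rfl
          · exact absurd hadj (hcross u v hu (by omega))
        · by_cases hv : (v : ℕ) < m
          · exact absurd hadj.symm (hcross v u hv (by omega))
          · refine Or.inr ⟨by omega, by omega, ?_⟩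
            show G.Adj (highV h2 _) (highV h2 _)
            convert hadj using 1 <;>
              · apply Fin.ext
                simp only [highV_val, finMkVal]
                omega
      · rintro (⟨hu, hv, h⟩ | ⟨hu, hv, h⟩)
        · have : G.Adj (lowV h2 ⟨u, hu⟩) (lowV h2 ⟨v, hv⟩) := h
          convert this using 1 <;> exact (Fin.ext rfl)
        · have : G.Adj (highV h2 ⟨(u : ℕ) - m, by have := u.isLt; omega⟩)
              (highV h2 ⟨(v : ℕ) - m, by have := v.isLt; omega⟩) := h
          convert this using 1 <;>
            · apply Fin.ext
              simp only [highV_val, finMkVal]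
              omega
    have hconn : (G.comap (lowV h2)).Connected := by
      rw [SimpleGraph.connected_iff]
      refine ⟨?_, ⟨⟨0, h1⟩⟩⟩
      · intro a b
        have ha : G.Reachable r (lowV h2 a) := (hmem _).2 a.isLt
        have hb : G.Reachable r (lowV h2 b) := (hmem _).2 b.isLt
        have hab : G.Reachable (lowV h2 a) (lowV h2 b) := ha.symm.trans hb
        rw [hglue] at hab
        have := glue_reach_H hab a.isLt b.isLt
        convert this using 2 <;> exact Fin.ext rfl
    exact ⟨hr, hglue, hconn⟩
  -- the equivalence
  let e : {p : SimpleGraph (Fin n) × Fin n //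
      {v : Fin n | p.1.Reachable p.2 v} = {v : Fin n | (v : ℕ) < m}} ≃
      ({H : SimpleGraph (Fin m) // H.Connected} × Fin m × SimpleGraph (Fin (n - m))) :=
    { toFun := fun p =>
        (⟨p.1.1.comap (lowV h2), (key p.1.1 p.1.2 p.2).2.2⟩,
          ⟨(p.1.2 : ℕ), (key p.1.1 p.1.2 p.2).1⟩, p.1.1.comap (highV h2))
      invFun := fun q =>
        ⟨(glue h2 q.1.1 q.2.2, lowV h2 q.2.1), glue_component (h2 := h2) q.1.2 q.2.1⟩
      left_inv := by
        rintro ⟨⟨G, r⟩, hS⟩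
        have hk := key G r hS
        apply Subtype.ext
        show (glue h2 (G.comap (lowV h2)) (G.comap (highV h2)), lowV h2 ⟨(r : ℕ), hk.1⟩)
          = (G, r)
        exact Prod.ext hk.2.1.symm (Fin.ext rfl)
      right_inv := by
        rintro ⟨⟨H, hH⟩, r, K⟩
        have e1 : (glue h2 H K).comap (lowV h2) = H := by
          ext a b
          show (glue h2 H K).Adj (lowV h2 a) (lowV h2 b) ↔ H.Adj a b
          rw [glue_adj_low (show ((lowV h2 a : Fin n) : ℕ) < m from a.isLt)
            (show ((lowV h2 b : Fin n) : ℕ) < m from b.isLt)]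
          constructor <;> intro h <;>
            · convert h using 2 <;> rfl
        have e2 : (⟨((lowV h2 r : Fin n) : ℕ), r.isLt⟩ : Fin m) = r := Fin.ext rfl
        have e3 : (glue h2 H K).comap (highV h2) = K := by
          ext a b
          show (glue h2 H K).Adj (highV h2 a) (highV h2 b) ↔ K.Adj a b
          rw [glue_adj_high (show m ≤ ((highV h2 a : Fin n) : ℕ) from Nat.le_add_right m a)
            (show m ≤ ((highV h2 b : Fin n) : ℕ) from Nat.le_add_right m b)]
          constructor <;> intro h <;>
            · convert h using 2 <;>
                · simp only [highV_val, finMkVal]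
                  omega
        exact Prod.ext (Subtype.ext e1) (Prod.ext e2 e3)
      }
  rw [Nat.card_congr e, Nat.card_prod, Nat.card_prod, Nat.card_eq_fintype_card (α := Fin m),
    Fintype.card_fin, card_simpleGraph]
  show numConn m * (m * 2 ^ ((n - m).choose 2)) = _
  ring
end
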